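/- Consider two players alternately resetting the top fee: player 1 (strategic) waits times t₁¹, t₁², … and player 2 waits times t₂¹, t₂², …, with H_j = t₁^j + t₂^j, and a block arrives at an independent exponential time with CDF G(t) = 1 - e^{-λt}. Player 1 wins the (2r)-th interval event with probability ϖ_{2r} = G(Σ_{j=1}^r H_j) - G(Σ_{j=1}^{r-1} H_j + t₁^r). Then player 1's total winning probability Σ_r ϖ_{2r} is nonincreasing in each t₁^i (its partial derivative with respect to each t₁^i is ≤ 0), so it is maximized by taking every t₁^i → 0. -/

import Mathlib

/-- Total probability that the block (Exp(λ) arrival) lands in one of the windows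
during which the strategic player holds the top fee:
`P = Σ_r [G(Σ_{j≤r} H_j) - G(Σ_{j<r} H_j + t₁^r)]` with `H_j = t₁^j + t₂^j` and
`G(t) = 1 - e^{-λt}`. -/
noncomputable def winProb (lam : ℝ) (t1 t2 : ℕ → ℝ) : ℝ :=
  ∑' r : ℕ,
    (Real.exp (-lam * (∑ j ∈ Finset.range r, (t1 j + t2 j) + t1 r)) -
      Real.exp (-lam * ∑ j ∈ Finset.range (r + 1), (t1 j + t2 j)))

private lemma term_eq (lam : ℝ) (t1 t2 : ℕ → ℝ) (r : ℕ) :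
    Real.exp (-lam * (∑ j ∈ Finset.range r, (t1 j + t2 j) + t1 r)) -
      Real.exp (-lam * ∑ j ∈ Finset.range (r + 1), (t1 j + t2 j)) =
    Real.exp (-lam * (∑ j ∈ Finset.range r, (t1 j + t2 j) + t1 r)) *
      (1 - Real.exp (-lam * t2 r)) := by
  rw [Finset.sum_range_succ, mul_sub, mul_one, ← Real.exp_add]
  have : -lam * (∑ j ∈ Finset.range r, (t1 j + t2 j) + t1 r) + -lam * t2 r =
      -lam * (∑ j ∈ Finset.range r, (t1 j + t2 j) + (t1 r + t2 r)) := by ring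
  rw [this]

private lemma term_nonneg (lam : ℝ) (hlam : 0 < lam) (t1 t2 : ℕ → ℝ)
    (ht2 : ∀ j, 0 ≤ t2 j) (r : ℕ) :
    0 ≤ Real.exp (-lam * (∑ j ∈ Finset.range r, (t1 j + t2 j) + t1 r)) -
      Real.exp (-lam * ∑ j ∈ Finset.range (r + 1), (t1 j + t2 j)) := by
  rw [term_eq]
  apply mul_nonneg (Real.exp_nonneg _)
  have : Real.exp (-lam * t2 r) ≤ 1 := by
    rw [← Real.exp_zero]
    apply Real.exp_le_exp.2
    have := mul_nonneg hlam.le (ht2 r)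
    nlinarith
  linarith

private lemma summable_aux (lam : ℝ) (hlam : 0 < lam) (t1 t2 : ℕ → ℝ)
    (ht1 : ∀ j, 0 ≤ t1 j) (ht2 : ∀ j, 0 ≤ t2 j) :
    Summable (fun r : ℕ =>
      Real.exp (-lam * (∑ j ∈ Finset.range r, (t1 j + t2 j) + t1 r)) -
        Real.exp (-lam * ∑ j ∈ Finset.range (r + 1), (t1 j + t2 j))) := by
  apply summable_of_sum_range_le (c := 1) (term_nonneg lam hlam t1 t2 ht2)
  intro n
  have hle : ∀ r : ℕ,
      Real.exp (-lam * (∑ j ∈ Finset.range r, (t1 j + t2 j) + t1 r)) -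
        Real.exp (-lam * ∑ j ∈ Finset.range (r + 1), (t1 j + t2 j)) ≤
      Real.exp (-lam * ∑ j ∈ Finset.range r, (t1 j + t2 j)) -
        Real.exp (-lam * ∑ j ∈ Finset.range (r + 1), (t1 j + t2 j)) := by
    intro r
    have : -lam * (∑ j ∈ Finset.range r, (t1 j + t2 j) + t1 r) ≤
        -lam * ∑ j ∈ Finset.range r, (t1 j + t2 j) := by
      have := mul_nonneg hlam.le (ht1 r)
      nlinarith
    have := Real.exp_le_exp.2 this
    linarith
  calc ∑ r ∈ Finset.range n,
      (Real.exp (-lam * (∑ j ∈ Finset.range r, (t1 j + t2 j) + t1 r)) -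
        Real.exp (-lam * ∑ j ∈ Finset.range (r + 1), (t1 j + t2 j)))
      ≤ ∑ r ∈ Finset.range n,
        (Real.exp (-lam * ∑ j ∈ Finset.range r, (t1 j + t2 j)) -
          Real.exp (-lam * ∑ j ∈ Finset.range (r + 1), (t1 j + t2 j))) :=
        Finset.sum_le_sum fun r _ => hle r
    _ = Real.exp (-lam * ∑ j ∈ Finset.range 0, (t1 j + t2 j)) -
          Real.exp (-lam * ∑ j ∈ Finset.range n, (t1 j + t2 j)) :=
        Finset.sum_range_sub' (fun r => Real.exp (-lam * ∑ j ∈ Finset.range r, (t1 j + t2 j))) n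
    _ ≤ 1 := by
        simp only [Finset.range_zero, Finset.sum_empty, mul_zero, Real.exp_zero]
        have := Real.exp_nonneg (-lam * ∑ j ∈ Finset.range n, (t1 j + t2 j))
        linarith

/-- Theorem 2 (n = 2, m = 1): the strategic player's winning probability is
nonincreasing in each of his waiting times `t₁^i`, so it is maximized by
taking every `t₁^i → 0`. -/
theorem stmt9 (lam : ℝ) (hlam : 0 < lam) (t1 t2 : ℕ → ℝ)
    (ht1 : ∀ j, 0 ≤ t1 j) (ht2 : ∀ j, 0 ≤ t2 j)
    (i : ℕ) (t1' : ℕ → ℝ) (hEq : ∀ j ≠ i, t1' j = t1 j) (hGe : t1 i ≤ t1' i) :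
    winProb lam t1' t2 ≤ winProb lam t1 t2 := by
  have hpt : ∀ j, t1 j ≤ t1' j := by
    intro j
    by_cases h : j = i
    · subst h; exact hGe
    · rw [hEq j h]
  have ht1' : ∀ j, 0 ≤ t1' j := fun j => le_trans (ht1 j) (hpt j)
  apply Summable.tsum_le_tsum _ (summable_aux lam hlam t1' t2 ht1' ht2)
    (summable_aux lam hlam t1 t2 ht1 ht2)
  intro r
  rw [term_eq lam t1 t2 r, term_eq lam t1' t2 r]
  apply mul_le_mul_of_nonneg_right
  · apply Real.exp_le_exp.2
    have hsum : ∑ j ∈ Finset.range r, (t1 j + t2 j) + t1 r ≤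
        ∑ j ∈ Finset.range r, (t1' j + t2 j) + t1' r := by
      have : ∑ j ∈ Finset.range r, (t1 j + t2 j) ≤
          ∑ j ∈ Finset.range r, (t1' j + t2 j) :=
        Finset.sum_le_sum fun j _ => by linarith [hpt j]
      linarith [hpt r]
    nlinarith
  · have : Real.exp (-lam * t2 r) ≤ 1 := by
      rw [← Real.exp_zero]
      apply Real.exp_le_exp.2
      have := mul_nonneg hlam.le (ht2 r)
      nlinarith
    linarith
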